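/- For the two-action model with W = [[0,−1],[−1,0]]: if 0 < β ≤ 2 the map F_β(x) = σ(βWx) has a unique fixed point in the 2-simplex, namely the uniform distribution (1/2, 1/2); if β > 2 it has exactly three fixed points. -/

import Mathlib

open Finset Matrix

/-- Softmax on `ℝⁿ`. -/
noncomputable def softmax {n : ℕ} (z : Fin n → ℝ) : Fin n → ℝ :=
  fun i => Real.exp (z i) / ∑ j, Real.exp (z j)

/-- The fixed points of the two-action logit feedback map
`F_β(x) = σ(βWx)`, `W = [[0,−1],[−1,0]]`, in the 2-simplex. -/
def twoActionFixedPoints (β : ℝ) : Set (Fin 2 → ℝ) :=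
  {x | (∀ i, 0 ≤ x i) ∧ x 0 + x 1 = 1
      ∧ softmax (β • (!![0, -1; -1, 0].mulVec x)) = x}

/-- auxiliary scalar function whose roots in `(0,1)` describe the fixed points -/
noncomputable def fb (β u : ℝ) : ℝ := Real.log u - Real.log (1-u) + β*(1-2*u)

lemma mem_fp_iff (β : ℝ) (x : Fin 2 → ℝ) :
    x ∈ twoActionFixedPoints β ↔
      ∃ u, 0 < u ∧ u < 1 ∧ fb β u = 0 ∧ x = ![u, 1-u] := by
  constructor
  · rintro ⟨hpos, hsum, hfix⟩
    have h0 := congrFun hfix 0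
    simp only [softmax, Matrix.mulVec, dotProduct, Fin.sum_univ_two] at h0
    simp [Matrix.vecHead, Matrix.vecTail] at h0
    have hD : 0 < Real.exp (-(β * x 1)) + Real.exp (-(β * x 0)) := by positivity
    have hu0 : 0 < x 0 := by rw [← h0]; positivity
    have hu1 : x 0 < 1 := by
      rw [← h0, div_lt_one hD]
      have := Real.exp_pos (-(β * x 0)); linarith
    have key : (1 - x 0) * Real.exp (-(β * x 1)) = x 0 * Real.exp (-(β * x 0)) := by
      rw [div_eq_iff hD.ne'] at h0
      nlinarith [h0]
    have hlog := congrArg Real.log key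
    rw [Real.log_mul (by linarith) (Real.exp_ne_zero _),
        Real.log_mul hu0.ne' (Real.exp_ne_zero _), Real.log_exp, Real.log_exp] at hlog
    have hx1 : x 1 = 1 - x 0 := by linarith
    refine ⟨x 0, hu0, hu1, ?_, ?_⟩
    · rw [hx1] at hlog
      simp only [fb]; nlinarith [hlog]
    · funext i; fin_cases i <;> simp [hx1]
  · rintro ⟨u, hu0, hu1, hf, rfl⟩
    have h1u : (0:ℝ) < 1 - u := by linarith
    have key : (1-u) * Real.exp (β * (u-1)) = u * Real.exp (-(β * u)) := by
      have e1 : (1-u) * Real.exp (β * (u-1)) = Real.exp (Real.log (1-u) + β * (u-1)) := by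
        rw [Real.exp_add, Real.exp_log h1u]
      have e2 : u * Real.exp (-(β * u)) = Real.exp (Real.log u + -(β * u)) := by
        rw [Real.exp_add, Real.exp_log hu0]
      rw [e1, e2, Real.exp_eq_exp]
      simp only [fb] at hf; nlinarith [hf]
    refine ⟨?_, by simp, ?_⟩
    · intro i; fin_cases i <;> simp <;> linarith
    · have hD : 0 < Real.exp (β * (u-1)) + Real.exp (-(β * u)) := by positivity
      funext i
      fin_cases i <;>
        · simp only [softmax, Matrix.mulVec, dotProduct, Fin.sum_univ_two]
          simp
          rw [div_eq_iff hD.ne']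
          nlinarith [key]

lemma hasDerivAt_fb (β : ℝ) {u : ℝ} (h0 : 0 < u) (h1 : u < 1) :
    HasDerivAt (fb β) (1/u + 1/(1-u) - 2*β) u := by
  have h1' : (0:ℝ) < 1 - u := by linarith
  have hl1 : HasDerivAt Real.log u⁻¹ u := Real.hasDerivAt_log h0.ne'
  have hsub : HasDerivAt (fun v : ℝ => 1 - v) (-1) u := by
    simpa using (hasDerivAt_id u).const_sub 1
  have hl2 : HasDerivAt (fun v => Real.log (1 - v)) ((1-u)⁻¹ * (-1)) u :=
    (Real.hasDerivAt_log h1'.ne').comp u hsub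
  have hlin : HasDerivAt (fun v : ℝ => β * (1 - 2*v)) (β * (-2)) u := by
    have : HasDerivAt (fun v : ℝ => 1 - 2*v) (-2) u := by
      simpa using ((hasDerivAt_id u).const_mul 2).const_sub 1
    exact this.const_mul β
  have := (hl1.sub hl2).add hlin
  refine this.congr_deriv ?_
  ring

lemma fb_half (β : ℝ) : fb β (1/2) = 0 := by
  simp [fb]
  rw [show (1:ℝ) - 2⁻¹ = 2⁻¹ by norm_num, Real.log_inv]
  ring

lemma fb_symm (β u : ℝ) : fb β (1-u) = -fb β u := by
  simp only [fb]; ring_nf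

lemma root_eq_half {β : ℝ} (hβ0 : 0 < β) (hβ : β ≤ 2) {u : ℝ}
    (h0 : 0 < u) (h1 : u < 1) (hf : fb β u = 0) : u = 1/2 := by
  have cont : ∀ s ⊆ Set.Ioo (0:ℝ) 1, ContinuousOn (fb β) s := fun s hs v hv =>
    ((hasDerivAt_fb β (hs hv).1 (hs hv).2).continuousAt).continuousWithinAt
  have dpos : ∀ v ∈ Set.Ioo (0:ℝ) 1, v ≠ 1/2 → 0 < deriv (fb β) v := by
    intro v hv hne
    obtain ⟨hva, hvb⟩ := hv
    rw [(hasDerivAt_fb β hva hvb).deriv]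
    have hv1 : (0:ℝ) < 1 - v := by linarith
    have hsq : 0 < (v - 1/2)^2 :=
      lt_of_le_of_ne (sq_nonneg _) (Ne.symm (pow_ne_zero _ (sub_ne_zero.mpr hne)))
    have h14 : v * (1-v) < 1/4 := by nlinarith
    have heq : 1/v + 1/(1-v) = 1/(v*(1-v)) := by
      rw [div_add_div _ _ hva.ne' hv1.ne', show 1*(1-v)+v*1 = 1 by ring]
    rw [heq, lt_sub_iff_add_lt, zero_add, lt_div_iff₀ (by positivity)]
    nlinarith
  have m1 : StrictMonoOn (fb β) (Set.Ioc 0 (1/2)) := by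
    apply strictMonoOn_of_deriv_pos (convex_Ioc _ _)
    · exact cont _ (fun v hv => ⟨hv.1, by linarith [hv.2]⟩)
    · rw [interior_Ioc]
      exact fun v hv => dpos v ⟨hv.1, by linarith [hv.2]⟩ (by linarith [hv.2])
  have m2 : StrictMonoOn (fb β) (Set.Ico (1/2) 1) := by
    apply strictMonoOn_of_deriv_pos (convex_Ico _ _)
    · exact cont _ (fun v hv => ⟨by linarith [hv.1], hv.2⟩)
    · rw [interior_Ico]
      exact fun v hv => dpos v ⟨by linarith [hv.1], hv.2⟩ (by linarith [hv.1])
  rcases lt_trichotomy u (1/2) with h|h|h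
  · have := m1 ⟨h0, h.le⟩ ⟨one_half_pos, le_refl _⟩ h
    rw [hf, fb_half] at this; linarith
  · exact h
  · have := m2 ⟨le_refl _, one_half_lt_one⟩ ⟨h.le, h1⟩ h
    rw [hf, fb_half] at this; linarith

set_option maxHeartbeats 1000000 in
lemma roots_beta_gt_two {β : ℝ} (hβ : 2 < β) :
    ∃ r, 1/2 < r ∧ r < 1 ∧ fb β r = 0 ∧
      ∀ u, 0 < u → u < 1 → fb β u = 0 → u = 1 - r ∨ u = 1/2 ∨ u = r := by
  have hβ0 : (0:ℝ) < β := by linarith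
  set s := Real.sqrt (1 - 2/β) with hsdef
  have h2β : 0 < 1 - 2/β := by
    have : 2/β < 1 := (div_lt_one hβ0).mpr hβ
    linarith
  have hs0 : 0 < s := Real.sqrt_pos.mpr h2β
  have hssq : s^2 = 1 - 2/β := Real.sq_sqrt h2β.le
  have h1β : 1/β < 1 := by rw [div_lt_one hβ0]; linarith
  have hsub : s ≤ 1 - 1/β := by
    rw [hsdef, show (1:ℝ) - 1/β = Real.sqrt ((1 - 1/β)^2) from (Real.sqrt_sq (by linarith)).symm]
    exact Real.sqrt_le_sqrt (by nlinarith [sq_nonneg (1/β), (by ring : (2:ℝ)/β = 2*(1/β))])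
  have hs1 : s < 1 := by
    have : (0:ℝ) < 1/β := by positivity
    linarith
  set a := (1 + s)/2 with ha
  have ha2 : 1/2 < a := by rw [ha]; linarith
  have ha1 : a < 1 := by rw [ha]; linarith
  clear_value a
  have hbs : β * s^2 = β - 2 := by rw [hssq]; field_simp
  clear_value s
  have cont : ∀ t ⊆ Set.Ioo (0:ℝ) 1, ContinuousOn (fb β) t := fun t ht v hv =>
    ((hasDerivAt_fb β (ht hv).1 (ht hv).2).continuousAt).continuousWithinAt
  have heq : ∀ v : ℝ, 0 < v → v < 1 → 1/v + 1/(1-v) = 1/(v*(1-v)) := by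
    intro v hv0 hv1
    have h1v : (0:ℝ) < 1 - v := by linarith
    rw [div_add_div _ _ hv0.ne' h1v.ne', show 1*(1-v)+v*1 = 1 by ring]
  -- derivative negative on (1/2, a)
  have dneg : ∀ v ∈ Set.Ioo (1/2 : ℝ) a, deriv (fb β) v < 0 := by
    intro v ⟨hv1, hv2⟩
    have hv0 : (0:ℝ) < v := by linarith
    have hvlt : v < 1 := by linarith
    have h1v : (0:ℝ) < 1 - v := by linarith
    rw [(hasDerivAt_fb β hv0 hvlt).deriv, heq v hv0 hvlt]
    have hkey : (v - 1/2)^2 < s^2/4 := by nlinarith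
    rw [sub_neg, div_lt_iff₀ (by positivity)]
    nlinarith [mul_lt_mul_of_pos_left hkey hβ0]
  -- derivative positive on (a, 1)
  have dpos : ∀ v ∈ Set.Ioo a 1, 0 < deriv (fb β) v := by
    intro v ⟨hv1, hv2⟩
    have hv0 : (0:ℝ) < v := by linarith
    have h1v : (0:ℝ) < 1 - v := by linarith
    rw [(hasDerivAt_fb β hv0 hv2).deriv, heq v hv0 hv2]
    have hkey : s^2/4 < (v - 1/2)^2 := by nlinarith
    rw [lt_sub_iff_add_lt, zero_add, lt_div_iff₀ (by positivity)]
    nlinarith [mul_lt_mul_of_pos_left hkey hβ0]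
  have anti1 : StrictAntiOn (fb β) (Set.Icc (1/2) a) := by
    apply strictAntiOn_of_deriv_neg (convex_Icc _ _)
    · exact cont _ (fun v hv => ⟨by linarith [hv.1], by linarith [hv.2]⟩)
    · rw [interior_Icc]; exact dneg
  have mono2 : StrictMonoOn (fb β) (Set.Ico a 1) := by
    apply strictMonoOn_of_deriv_pos (convex_Ico _ _)
    · exact cont _ (fun v hv => ⟨by linarith [hv.1], hv.2⟩)
    · rw [interior_Ico]; exact dpos
  have fa_neg : fb β a < 0 := by
    have := anti1 (Set.left_mem_Icc.mpr ha2.le) (Set.right_mem_Icc.mpr ha2.le) ha2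
    rwa [fb_half] at this
  -- the point b
  set ε := Real.exp (-(2*β)) with hε
  have hε0 : 0 < ε := Real.exp_pos _
  have hεβ : ε < 1/(2*β) := by
    rw [hε, Real.exp_neg, one_div]
    exact inv_strictAnti₀ (by positivity) (by linarith [Real.add_one_le_exp (2*β)])
  have hε12 : ε < 1/2 := by
    have : 1/(2*β) < 1/2 := by
      rw [div_lt_div_iff₀ (by positivity) (by norm_num)]; linarith
    linarith
  have hlogε : Real.log ε = -(2*β) := Real.log_exp _
  clear_value ε
  set b := 1 - ε with hb
  clear_value b
  have hab : a < b := by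
    have h1 : 1/(2*β) ≤ (1-s)/2 := by
      rw [div_le_div_iff₀ (by positivity) (by norm_num)]
      nlinarith [(by ring : (2:ℝ)/β = 2*(1/β))]
    have : ε < (1-s)/2 := lt_of_lt_of_le hεβ h1
    rw [hb, ha]; linarith
  have hb1 : b < 1 := by rw [hb]; linarith
  have hfb_pos : 0 < fb β b := by
    have h2e : (2:ℝ) < Real.exp 1 := by
      have := Real.exp_one_gt_d9; norm_num at this ⊢; linarith
    have hexp1 : Real.exp (-1) < 1/2 := by
      have hprod : Real.exp (-1) * Real.exp 1 = 1 := by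
        rw [← Real.exp_add]; norm_num
      nlinarith [Real.exp_pos (-1), mul_lt_mul_of_pos_left h2e (Real.exp_pos (-1))]
    have hlog1 : -1 < Real.log (1-ε) := by
      rw [Real.lt_log_iff_exp_lt (by linarith)]
      linarith
    have hexpand : fb β (1-ε) = Real.log (1-ε) - Real.log ε + β*(1-2*(1-ε)) := by
      simp only [fb, show (1:ℝ) - (1-ε) = ε by ring]
    rw [hb, hexpand, hlogε, show β*(1-2*(1-ε)) = 2*(β*ε) - β by ring]
    clear hexpand hlogε hexp1 h2e hb hab hb1 cont heq dneg dpos anti1 mono2 fa_neg hεβ hε12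
    linarith [mul_pos hβ0 hε0]
  -- IVT
  have hsubset : Set.Icc a b ⊆ Set.Ioo (0:ℝ) 1 :=
    fun v hv => ⟨by linarith [hv.1], by linarith [hv.2]⟩
  have hivt := intermediate_value_Ioo hab.le (cont _ hsubset)
  obtain ⟨r, hrmem, hfr⟩ := hivt (Set.mem_Ioo.mpr ⟨fa_neg, hfb_pos⟩)
  obtain ⟨hra, hrb⟩ := hrmem
  have hr2 : 1/2 < r := by linarith
  have hr1 : r < 1 := by linarith
  have hclaim : ∀ v, 1/2 < v → v < 1 → fb β v = 0 → v = r := by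
    intro v hv2 hv1 hfv
    rcases le_or_gt v a with h | h
    · exfalso
      have := anti1 (Set.left_mem_Icc.mpr ha2.le) ⟨hv2.le, h⟩ hv2
      rw [hfv, fb_half] at this; linarith
    · exact mono2.injOn ⟨h.le, hv1⟩ ⟨hra.le, hr1⟩ (by rw [hfv, hfr])
  refine ⟨r, hr2, hr1, hfr, ?_⟩
  intro u hu0 hu1 hfu
  rcases lt_trichotomy u (1/2) with h | h | h
  · left
    have : 1 - u = r := hclaim (1-u) (by linarith) (by linarith)
      (by rw [fb_symm, hfu, neg_zero])
    linarith
  · right; left; exact h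
  · right; right; exact hclaim u h hu1 hfu

/-- for `0 < β ≤ 2` the two-action logit map has the uniform
distribution as its unique fixed point; for `β > 2` it has exactly three
fixed points. -/
theorem two_action_fixed_point_phase_diagram (β : ℝ) (hβ : 0 < β) :
    (β ≤ 2 → twoActionFixedPoints β = {![1 / 2, 1 / 2]})
    ∧ (2 < β → ∃ x y z : Fin 2 → ℝ, x ≠ y ∧ x ≠ z ∧ y ≠ z ∧
        twoActionFixedPoints β = {x, y, z}) := by
  constructor
  · intro hβ2
    ext x
    rw [mem_fp_iff, Set.mem_singleton_iff]
    constructor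
    · rintro ⟨u, h0, h1, hf, rfl⟩
      have := root_eq_half hβ hβ2 h0 h1 hf
      subst this
      norm_num
    · rintro rfl
      exact ⟨1/2, by norm_num, by norm_num, fb_half β, by norm_num⟩
  · intro hβ2
    obtain ⟨r, hr2, hr1, hfr, huniq⟩ := roots_beta_gt_two hβ2
    refine ⟨![1-r, 1-(1-r)], ![1/2, 1-(1/2 : ℝ)], ![r, 1-r], ?_, ?_, ?_, ?_⟩
    · intro h
      have := congrFun h 0
      simp at this
      linarith
    · intro h
      have := congrFun h 0
      simp at this
      linarith
    · intro h
      have := congrFun h 0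
      simp at this
      linarith
    · ext x
      rw [mem_fp_iff]
      constructor
      · rintro ⟨u, h0, h1, hf, rfl⟩
        rcases huniq u h0 h1 hf with h | h | h <;> subst h
        · left; rfl
        · right; left; norm_num
        · right; right; rfl
      · rintro (rfl | rfl | rfl)
        · exact ⟨1-r, by linarith, by linarith, by rw [fb_symm, hfr, neg_zero], rfl⟩
        · exact ⟨1/2, by norm_num, by norm_num, fb_half β, rfl⟩
        · exact ⟨r, by linarith, hr1, hfr, rfl⟩
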